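/- Let r ∈ ℝ and let X be an n×n complex matrix with operator norm ‖X‖ < 1. Then the series Σ_{k=0}^∞ C(r,k) X^k converges absolutely in operator norm, where C(r,k) = r(r−1)⋯(r−k+1)/k! is the generalized binomial coefficient, and if additionally I + X is positive definite Hermitian, the sum equals (I+X)^r defined via the spectral functional calculus. -/

import Mathlib

open Filter


open Matrix
open scoped Matrix.Norms.L2Operator ComplexOrder

/-- The generalized binomial coefficient `C(r,k) = r(r-1)⋯(r-k+1)/k!`. -/
noncomputable def genBinom (r : ℝ) (k : ℕ) : ℝ :=
  (∏ i ∈ Finset.range k, (r - i)) / (k.factorial : ℝ)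

/-- Real power of a matrix via the spectral functional calculus (junk value `0`
for non-Hermitian matrices). -/
noncomputable def matRpow {n : Type*} [Fintype n] [DecidableEq n]
    (r : ℝ) (A : Matrix n n ℂ) : Matrix n n ℂ :=
  if hA : A.IsHermitian then
    (hA.eigenvectorUnitary : Matrix n n ℂ) *
      Matrix.diagonal (fun i => ((hA.eigenvalues i ^ r : ℝ) : ℂ)) *
      (hA.eigenvectorUnitary : Matrix n n ℂ)ᴴ
  else 0

section ScalarPart
lemma genBinom_zero (r : ℝ) : genBinom r 0 = 1 := by simp [genBinom]

lemma genBinom_succ (r : ℝ) (k : ℕ) :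
    genBinom r (k + 1) = genBinom r k * (r - k) / (k + 1) := by
  have hk : ((k + 1 : ℕ) : ℝ) ≠ 0 := by positivity
  have hf : (k.factorial : ℝ) ≠ 0 := by exact_mod_cast k.factorial_ne_zero
  rw [genBinom, genBinom, Finset.prod_range_succ, Nat.factorial_succ]
  push_cast
  rw [div_mul_eq_mul_div, div_div, div_eq_div_iff (by positivity) (by positivity)]
  ring

lemma succ_mul_genBinom (r : ℝ) (k : ℕ) :
    ((k : ℝ) + 1) * genBinom r (k + 1) = (r - k) * genBinom r k := by
  have hk : ((k : ℝ) + 1) ≠ 0 := by positivity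
  rw [genBinom_succ]
  field_simp

lemma tendsto_ratio (r a : ℝ) :
    Tendsto (fun k : ℕ => |r - k| * a / (k + 1)) atTop (nhds a) := by
  have h1 : Tendsto (fun k : ℕ => ((r + 1) / (k + 1)) : ℕ → ℝ) atTop (nhds 0) := by
    have := (tendsto_const_div_atTop_nhds_zero_nat (r + 1)).comp (tendsto_add_atTop_nat 1)
    convert this using 2 with k
    simp [Function.comp]
  have h2 : Tendsto (fun k : ℕ => (1 - (r + 1) / (k + 1)) * a) atTop (nhds a) := by
    have := ((tendsto_const_nhds (x := (1:ℝ))).sub h1).mul_const a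
    simpa using this
  refine h2.congr' ?_
  filter_upwards [eventually_ge_atTop ⌈r⌉₊] with k hk
  have hrk : r ≤ (k : ℝ) := le_trans (Nat.le_ceil r) (by exact_mod_cast hk)
  have hk1 : ((k : ℝ) + 1) ≠ 0 := by positivity
  rw [abs_sub_comm, abs_of_nonneg (by linarith)]
  field_simp
  ring

lemma summable_abs_genBinom (r : ℝ) {a : ℝ} (h0 : 0 ≤ a) (h1 : a < 1) :
    Summable (fun k => |genBinom r k| * a ^ k) := by
  refine summable_of_ratio_norm_eventually_le (r := (1 + a) / 2) (by linarith) ?_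
  filter_upwards [(tendsto_ratio r a).eventually_lt_const
    (show a < (1 + a) / 2 by linarith)] with k hk
  have hk1 : (0:ℝ) < (k : ℝ) + 1 := by positivity
  have habs : |genBinom r (k + 1)| = |genBinom r k| * |r - k| / ((k : ℝ) + 1) := by
    rw [genBinom_succ, abs_div, abs_mul, abs_of_pos hk1]
  rw [Real.norm_eq_abs, Real.norm_eq_abs,
    abs_of_nonneg (mul_nonneg (abs_nonneg _) (pow_nonneg h0 _)),
    abs_of_nonneg (mul_nonneg (abs_nonneg _) (pow_nonneg h0 _)), habs]
  calc |genBinom r k| * |r - k| / ((k : ℝ) + 1) * a ^ (k + 1)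
      = (|r - k| * a / ((k : ℝ) + 1)) * (|genBinom r k| * a ^ k) := by ring
    _ ≤ (1 + a) / 2 * (|genBinom r k| * a ^ k) :=
        mul_le_mul_of_nonneg_right hk.le (by positivity)

lemma summable_deriv_genBinom (r : ℝ) {a : ℝ} (h0 : 0 ≤ a) (h1 : a < 1) :
    Summable (fun k : ℕ => ((k : ℝ) + 1) * |genBinom r (k + 1)| * a ^ k) := by
  refine summable_of_ratio_norm_eventually_le (r := (1 + a) / 2) (by linarith) ?_
  filter_upwards [(tendsto_ratio (r - 1) a).eventually_lt_const
    (show a < (1 + a) / 2 by linarith)] with k hk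
  have hk1 : (0:ℝ) < (k : ℝ) + 1 := by positivity
  have e1 : ((k : ℝ) + 1 + 1) * |genBinom r (k + 2)|
      = |r - ((k : ℝ) + 1)| * |genBinom r (k + 1)| := by
    rw [← abs_of_pos (show (0:ℝ) < (k : ℝ) + 1 + 1 by positivity), ← abs_mul, ← abs_mul]
    have := succ_mul_genBinom r (k + 1)
    push_cast at this
    rw [this]
  rw [Real.norm_eq_abs, Real.norm_eq_abs,
    abs_of_nonneg (mul_nonneg (mul_nonneg (by positivity) (abs_nonneg _)) (pow_nonneg h0 _)),
    abs_of_nonneg (mul_nonneg (mul_nonneg (by positivity) (abs_nonneg _)) (pow_nonneg h0 _))]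
  push_cast
  have hrw : r - ((k : ℝ) + 1) = (r - 1) - k := by ring
  calc ((k : ℝ) + 1 + 1) * |genBinom r (k + 1 + 1)| * a ^ (k + 1)
      = |r - ((k : ℝ) + 1)| * |genBinom r (k + 1)| * a ^ (k + 1) := by
        rw [show k + 1 + 1 = k + 2 from rfl, e1]
    _ = (|(r - 1) - (k : ℝ)| * a / ((k : ℝ) + 1)) * (((k : ℝ) + 1) * |genBinom r (k + 1)| * a ^ k) := by
        rw [← hrw]; field_simp; ring
    _ ≤ (1 + a) / 2 * (((k : ℝ) + 1) * |genBinom r (k + 1)| * a ^ k) :=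
        mul_le_mul_of_nonneg_right hk.le (by positivity)

lemma summable_genBinom_mul_pow (r : ℝ) {x : ℝ} (hx : |x| < 1) :
    Summable (fun k : ℕ => genBinom r k * x ^ k) := by
  refine Summable.of_abs ?_
  have := summable_abs_genBinom r (abs_nonneg x) hx
  refine this.congr fun k => ?_
  rw [abs_mul, abs_pow]

lemma summable_shifted_genBinom (r : ℝ) {y : ℝ} (hy : |y| < 1) :
    Summable (fun k : ℕ => (r - k) * genBinom r k * y ^ k) := by
  refine Summable.of_abs ?_
  have := summable_deriv_genBinom r (abs_nonneg y) hy
  refine this.congr fun k => ?_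
  have e : ((k : ℝ) + 1) * |genBinom r (k + 1)| = |(r - k) * genBinom r k| := by
    rw [← abs_of_pos (show (0:ℝ) < (k : ℝ) + 1 by positivity), ← abs_mul]
    rw [succ_mul_genBinom r k]
  rw [abs_mul, abs_pow, ← e]

lemma summable_k_genBinom (r : ℝ) {y : ℝ} (hy : |y| < 1) :
    Summable (fun k : ℕ => (k : ℝ) * genBinom r k * y ^ k) := by
  have := ((summable_genBinom_mul_pow r hy).mul_left r).sub (summable_shifted_genBinom r hy)
  refine this.congr fun k => ?_
  ring

lemma sum_identity (r : ℝ) {y : ℝ} (hy : |y| < 1) :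
    (1 + y) * ∑' k : ℕ, (r - k) * genBinom r k * y ^ k
      = r * ∑' k : ℕ, genBinom r k * y ^ k := by
  have hsum1 := summable_genBinom_mul_pow r hy
  have hsumA := summable_shifted_genBinom r hy
  have hsumk := summable_k_genBinom r hy
  have hT : ∑' k : ℕ, (r - k) * genBinom r k * y ^ k
      = r * (∑' k : ℕ, genBinom r k * y ^ k) - ∑' k : ℕ, (k : ℝ) * genBinom r k * y ^ k := by
    rw [← tsum_mul_left, ← Summable.tsum_sub (hsum1.mul_left r) hsumk]
    exact tsum_congr fun k => by ring
  have hyA : y * ∑' k : ℕ, (r - k) * genBinom r k * y ^ k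
      = ∑' k : ℕ, (k : ℝ) * genBinom r k * y ^ k := by
    rw [← tsum_mul_left, Summable.tsum_eq_zero_add hsumk]
    simp only [Nat.cast_zero, zero_mul, zero_add]
    refine tsum_congr fun k => ?_
    push_cast
    rw [pow_succ]
    linear_combination (-(y ^ k * y)) * succ_mul_genBinom r k
  calc (1 + y) * ∑' k : ℕ, (r - k) * genBinom r k * y ^ k
      = (∑' k : ℕ, (r - k) * genBinom r k * y ^ k)
        + y * ∑' k : ℕ, (r - k) * genBinom r k * y ^ k := by ring
    _ = r * ∑' k : ℕ, genBinom r k * y ^ k := by rw [hyA, hT]; ring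

lemma hasDerivAt_genBinom_tsum (r : ℝ) {x : ℝ} (hx : |x| < 1) :
    HasDerivAt (fun y : ℝ => ∑' k : ℕ, genBinom r k * y ^ k)
      (∑' k : ℕ, (r - k) * genBinom r k * x ^ k) x := by
  set b : ℝ := (|x| + 1) / 2 with hb
  have hxb : |x| < b := by rw [hb]; linarith
  have hb0 : (0:ℝ) ≤ b := le_trans (abs_nonneg x) hxb.le
  have hb1 : b < 1 := by rw [hb]; linarith
  have hxt : x ∈ Set.Ioo (-b) b := by
    constructor
    · linarith [neg_abs_le x]
    · linarith [le_abs_self x]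
  have h0t : (0:ℝ) ∈ Set.Ioo (-b) b := by
    constructor <;> [linarith [abs_nonneg x]; linarith [abs_nonneg x]]
  set u : ℕ → ℝ := fun k => (k : ℝ) * |genBinom r k| * b ^ (k - 1) with hu_def
  have hu : Summable u := by
    rw [← summable_nat_add_iff 1]
    refine (summable_deriv_genBinom r hb0 hb1).congr fun k => ?_
    simp [hu_def]
  have key := hasDerivAt_tsum_of_isPreconnected hu isOpen_Ioo
    (convex_Ioo (-b) b).isPreconnected
    (g := fun (k : ℕ) (y : ℝ) => genBinom r k * y ^ k)
    (g' := fun (k : ℕ) (y : ℝ) => genBinom r k * ((k : ℝ) * y ^ (k - 1)))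
    (fun k y _ => (hasDerivAt_pow k y).const_mul _)
    (fun k y hy => ?_) h0t ?_ hxt
  · have hS : Summable (fun k : ℕ => genBinom r k * ((k : ℝ) * x ^ (k - 1))) := by
      refine Summable.of_norm_bounded hu fun k => ?_
      rw [Real.norm_eq_abs, abs_mul, abs_mul, abs_pow, Nat.abs_cast, hu_def]
      have : |x| ^ (k - 1) ≤ b ^ (k - 1) := pow_le_pow_left₀ (abs_nonneg x) hxb.le _
      calc |genBinom r k| * ((k:ℝ) * |x| ^ (k-1)) ≤ |genBinom r k| * ((k:ℝ) * b ^ (k-1)) := by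
            apply mul_le_mul_of_nonneg_left _ (abs_nonneg _)
            exact mul_le_mul_of_nonneg_left this (Nat.cast_nonneg k)
        _ = (k:ℝ) * |genBinom r k| * b ^ (k-1) := by ring
    have hconv : ∑' k : ℕ, genBinom r k * ((k : ℝ) * x ^ (k - 1))
        = ∑' k : ℕ, (r - k) * genBinom r k * x ^ k := by
      rw [Summable.tsum_eq_zero_add hS]
      simp only [Nat.cast_zero, zero_mul, mul_zero, zero_add]
      refine tsum_congr fun k => ?_
      push_cast
      linear_combination x ^ k * succ_mul_genBinom r k
    rw [← hconv]
    exact key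
  · rw [Real.norm_eq_abs, abs_mul, abs_mul, abs_pow, Nat.abs_cast, hu_def]
    have hyb : |y| ≤ b := by
      rw [abs_le]; exact ⟨hy.1.le, hy.2.le⟩
    have : |y| ^ (k - 1) ≤ b ^ (k - 1) := pow_le_pow_left₀ (abs_nonneg y) hyb _
    calc |genBinom r k| * ((k:ℝ) * |y| ^ (k-1)) ≤ |genBinom r k| * ((k:ℝ) * b ^ (k-1)) := by
          apply mul_le_mul_of_nonneg_left _ (abs_nonneg _)
          exact mul_le_mul_of_nonneg_left this (Nat.cast_nonneg k)
      _ = (k:ℝ) * |genBinom r k| * b ^ (k-1) := by ring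
  · have h0 : |(0:ℝ)| < 1 := by simp
    exact summable_genBinom_mul_pow r h0

lemma hasDerivAt_g (r : ℝ) {y : ℝ} (hy : |y| < 1) :
    HasDerivAt (fun z : ℝ =>
      (∑' k : ℕ, genBinom r k * z ^ k) * (1 + z) ^ (-r)) 0 y := by
  have hy1 : -1 < y := by linarith [neg_abs_le y]
  have h1y : (0:ℝ) < 1 + y := by linarith
  have hfD := hasDerivAt_genBinom_tsum r hy
  have hpow : HasDerivAt (fun z : ℝ => (1 + z) ^ (-r)) (-r * (1 + y) ^ (-r - 1)) y := by
    have h := Real.hasDerivAt_rpow_const (x := 1 + y) (p := -r) (Or.inl (ne_of_gt h1y))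
    have h2 : HasDerivAt (fun z : ℝ => 1 + z) 1 y := (hasDerivAt_id y).const_add 1
    have := h.comp y h2
    simpa [Function.comp_def] using this
  have hprod := hfD.mul hpow
  have e : (1 + y) ^ (-r) = (1 + y) * (1 + y) ^ (-r - 1) := by
    have e0 := Real.rpow_add h1y 1 (-r - 1)
    rw [show (1:ℝ) + (-r - 1) = -r by ring, Real.rpow_one] at e0
    exact e0
  have hzero : (∑' k : ℕ, (r - k) * genBinom r k * y ^ k) * (1 + y) ^ (-r)
      + (∑' k : ℕ, genBinom r k * y ^ k) * (-r * (1 + y) ^ (-r - 1)) = 0 := by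
    calc (∑' k : ℕ, (r - k) * genBinom r k * y ^ k) * (1 + y) ^ (-r)
        + (∑' k : ℕ, genBinom r k * y ^ k) * (-r * (1 + y) ^ (-r - 1))
        = ((1 + y) * ∑' k : ℕ, (r - k) * genBinom r k * y ^ k) * (1 + y) ^ (-r - 1)
          - (r * ∑' k : ℕ, genBinom r k * y ^ k) * (1 + y) ^ (-r - 1) := by rw [e]; ring
      _ = 0 := by rw [sum_identity r hy]; ring
  rw [← hzero]
  exact hprod

lemma hasSum_genBinom (r : ℝ) {x : ℝ} (hx : |x| < 1) :
    HasSum (fun k : ℕ => genBinom r k * x ^ k) ((1 + x) ^ r) := by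
  have hx1 : -1 < x := by linarith [neg_abs_le x]
  have hx2 : x < 1 := by linarith [le_abs_self x]
  have h1x : (0:ℝ) < 1 + x := by linarith
  set g : ℝ → ℝ := fun z => (∑' k : ℕ, genBinom r k * z ^ k) * (1 + z) ^ (-r) with hg
  have habs : ∀ t : ℝ, t ∈ Set.Icc (min x 0) (max x 0) → |t| < 1 := by
    intro t ht
    rw [abs_lt]
    rcases ht with ⟨h1, h2⟩
    constructor
    · rcases le_or_gt x 0 with h | h
      · have : min x 0 = x := min_eq_left h; linarith [this ▸ h1]
      · have : min x 0 = 0 := min_eq_right h.le; linarith [this ▸ h1]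
    · rcases le_or_gt x 0 with h | h
      · have : max x 0 = 0 := max_eq_right h; linarith [this ▸ h2]
      · have : max x 0 = x := max_eq_left h.le; linarith [this ▸ h2]
  have hg0 : g 0 = 1 := by
    have : (∑' k : ℕ, genBinom r k * (0:ℝ) ^ k) = 1 := by
      rw [tsum_eq_single 0 (fun k hk => by simp [zero_pow hk])]
      simp [genBinom_zero]
    simp [hg, this, Real.one_rpow]
  have hgconst : g x = g 0 := by
    rcases le_or_gt 0 x with h | h
    · have := constant_of_has_deriv_right_zero (f := g) (a := 0) (b := x)
        (fun t ht => (hasDerivAt_g r (habs t (by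
          simp only [Set.mem_Icc] at ht ⊢
          constructor
          · exact le_trans (min_le_right x 0) ht.1
          · exact le_trans ht.2 (le_max_left x 0)))).continuousAt.continuousWithinAt)
        (fun t ht => (hasDerivAt_g r (habs t (by
          simp only [Set.mem_Ico, Set.mem_Icc] at ht ⊢
          constructor
          · exact le_trans (min_le_right x 0) ht.1
          · exact le_trans ht.2.le (le_max_left x 0)))).hasDerivWithinAt)
      exact this x (Set.right_mem_Icc.mpr h)
    · have := constant_of_has_deriv_right_zero (f := g) (a := x) (b := 0)
        (fun t ht => (hasDerivAt_g r (habs t (by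
          simp only [Set.mem_Icc] at ht ⊢
          constructor
          · exact le_trans (min_le_left x 0) ht.1
          · exact le_trans ht.2 (le_max_right x 0)))).continuousAt.continuousWithinAt)
        (fun t ht => (hasDerivAt_g r (habs t (by
          simp only [Set.mem_Ico, Set.mem_Icc] at ht ⊢
          constructor
          · exact le_trans (min_le_left x 0) ht.1
          · exact le_trans ht.2.le (le_max_right x 0)))).hasDerivWithinAt)
      exact (this 0 (Set.right_mem_Icc.mpr h.le)).symm
  have hfx : (∑' k : ℕ, genBinom r k * x ^ k) = (1 + x) ^ r := by
    have h1 : g x = 1 := hgconst.trans hg0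
    have h2 : (1 + x) ^ (-r) = ((1 + x) ^ r)⁻¹ := by
      rw [← Real.rpow_neg h1x.le]
    have h3 : (1 + x) ^ r ≠ 0 := (Real.rpow_pos_of_pos h1x r).ne'
    rw [hg] at h1
    simp only [h2] at h1
    field_simp at h1
    exact h1
  exact hfx ▸ (summable_genBinom_mul_pow r hx).hasSum

end ScalarPart

section AuxMatrix

variable {n : Type*} [Fintype n] [DecidableEq n]


lemma conj_pow' (U D : Matrix n n ℂ) (h1 : U * star U = 1) (h2 : star U * U = 1) (k : ℕ) :
    (U * D * star U) ^ k = U * D ^ k * star U := by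
  induction k with
  | zero => rw [pow_zero, pow_zero, mul_one, h1]
  | succ m ih =>
    rw [pow_succ, pow_succ, ih]
    calc U * D ^ m * star U * (U * D * star U)
        = U * D ^ m * (star U * U) * D * star U := by
          simp only [Matrix.mul_assoc]
      _ = U * (D ^ m * D) * star U := by rw [h2, Matrix.mul_one]; simp only [Matrix.mul_assoc]

end AuxMatrix

/-- Generalized binomial theorem for matrix powers: for `‖X‖ < 1` (operator norm)
the series `∑ C(r,k) X^k` converges absolutely, and if `I + X` is positive definite
its sum is `(I + X)^r` given by the spectral functional calculus. -/
theorem binomial_series (r : ℝ) {n : Type*} [Fintype n] [DecidableEq n]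
    (X : Matrix n n ℂ) (hX : ‖X‖ < 1) :
    Summable (fun k : ℕ => ‖genBinom r k • X ^ k‖) ∧
    ((1 + X).PosDef → ∑' k : ℕ, genBinom r k • X ^ k = matRpow r (1 + X)) := by
  have hb : (0:ℝ) ≤ ‖X‖ := norm_nonneg X
  have hnorm1 : ‖(1 : Matrix n n ℂ)‖ ≤ 1 := by
    have h : ‖(1 : Matrix n n ℂ)‖
        = ‖(1 : EuclideanSpace ℂ n →L[ℂ] EuclideanSpace ℂ n)‖ := by
      rw [Matrix.cstar_norm_def, _root_.map_one]
    rw [h, ContinuousLinearMap.one_def]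
    exact ContinuousLinearMap.norm_id_le
  have hpowle : ∀ k : ℕ, ‖X ^ k‖ ≤ ‖X‖ ^ k := by
    intro k
    induction k with
    | zero => simpa using hnorm1
    | succ m ih =>
      rw [pow_succ, pow_succ]
      calc ‖X ^ m * X‖ ≤ ‖X ^ m‖ * ‖X‖ := norm_mul_le _ _
        _ ≤ ‖X‖ ^ m * ‖X‖ := mul_le_mul_of_nonneg_right ih hb
  have hsummable : Summable (fun k : ℕ => ‖genBinom r k • X ^ k‖) := by
    refine Summable.of_nonneg_of_le (fun k => norm_nonneg _) (fun k => ?_)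
      (summable_abs_genBinom r hb hX)
    rw [norm_smul, Real.norm_eq_abs]
    exact mul_le_mul_of_nonneg_left (hpowle k) (abs_nonneg _)
  refine ⟨hsummable, fun hpd => ?_⟩
  have hA : (1 + X).IsHermitian := hpd.isHermitian
  set U : Matrix n n ℂ := (hA.eigenvectorUnitary : Matrix n n ℂ) with hU
  have hU1 : U * star U = 1 := Matrix.mem_unitaryGroup_iff.mp hA.eigenvectorUnitary.2
  have hU2 : star U * U = 1 := Matrix.mem_unitaryGroup_iff'.mp hA.eigenvectorUnitary.2
  set d : n → ℝ := fun i => hA.eigenvalues i - 1 with hd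
  have hXd : X = U * diagonal (fun i => (d i : ℂ)) * star U := by
    have hs := hA.spectral_theorem
    rw [Unitary.conjStarAlgAut_apply] at hs
    have h1 : (1 : Matrix n n ℂ) = U * diagonal (fun _ : n => (1:ℂ)) * star U := by
      rw [diagonal_one, Matrix.mul_one, hU1]
    calc X = (1 + X) - 1 := by rw [add_sub_cancel_left]
      _ = U * diagonal (RCLike.ofReal ∘ hA.eigenvalues) * star U
          - U * diagonal (fun _ : n => (1:ℂ)) * star U := by rw [← hs, ← h1]
      _ = U * (diagonal (RCLike.ofReal ∘ hA.eigenvalues) - diagonal (fun _ : n => (1:ℂ)))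
            * star U := by rw [Matrix.mul_sub, Matrix.sub_mul]
      _ = U * diagonal (fun i => (d i : ℂ)) * star U := by
            rw [diagonal_sub]
            congr 2
            funext i
            simp [hd]
  have hpow : ∀ k : ℕ, X ^ k = U * diagonal (fun i => (d i : ℂ)) ^ k * star U := by
    intro k
    rw [hXd, conj_pow' U _ hU1 hU2]
  have hdlt : ∀ i, |d i| < 1 := by
    intro i
    have hv := hA.mulVec_eigenvectorBasis i
    have hXv : X *ᵥ ⇑(hA.eigenvectorBasis i) = d i • ⇑(hA.eigenvectorBasis i) := by
      have hadd : (1 + X) *ᵥ ⇑(hA.eigenvectorBasis i)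
          = ⇑(hA.eigenvectorBasis i) + X *ᵥ ⇑(hA.eigenvectorBasis i) := by
        rw [Matrix.add_mulVec, Matrix.one_mulVec]
      rw [hadd] at hv
      have : X *ᵥ ⇑(hA.eigenvectorBasis i)
          = hA.eigenvalues i • ⇑(hA.eigenvectorBasis i) - ⇑(hA.eigenvectorBasis i) := by
        rw [← hv]; abel
      rw [this, hd]
      rw [sub_smul, one_smul]
    have hnv : ‖hA.eigenvectorBasis i‖ = 1 := hA.eigenvectorBasis.orthonormal.1 i
    have hle := X.l2_opNorm_mulVec (hA.eigenvectorBasis i)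
    rw [hnv, mul_one] at hle
    have hnorm : ‖(EuclideanSpace.equiv n ℂ).symm (X *ᵥ ⇑(hA.eigenvectorBasis i))‖
        = |d i| := by
      rw [hXv]
      have : (EuclideanSpace.equiv n ℂ).symm (d i • ⇑(hA.eigenvectorBasis i))
          = d i • hA.eigenvectorBasis i := rfl
      rw [this, norm_smul, Real.norm_eq_abs, hnv, mul_one]
    have hle' : |d i| ≤ ‖X‖ := by rw [← hnorm]; exact hle
    exact lt_of_le_of_lt hle' hX
  have hsumd : ∀ i, HasSum (fun k : ℕ => genBinom r k * d i ^ k) (hA.eigenvalues i ^ r) := by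
    intro i
    have h := hasSum_genBinom r (hdlt i)
    rwa [show 1 + d i = hA.eigenvalues i by rw [hd]; ring] at h
  have hterm : ∀ k : ℕ, genBinom r k • X ^ k
      = U * diagonal (fun i => ((genBinom r k * d i ^ k : ℝ) : ℂ)) * star U := by
    intro k
    rw [hpow k, diagonal_pow, ← smul_mul_assoc, ← mul_smul_comm, ← diagonal_smul]
    have harg : (genBinom r k • ((fun i => ((d i : ℝ) : ℂ)) ^ k))
        = fun i => ((genBinom r k * d i ^ k : ℝ) : ℂ) := by
      funext i
      rw [Pi.smul_apply, Pi.pow_apply, Complex.real_smul]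
      push_cast
      ring
    rw [harg]
  have hcs : ∀ i, Summable (fun k : ℕ => ((genBinom r k * d i ^ k : ℝ) : ℂ)) := fun i =>
    Complex.summable_ofReal.mpr (hsumd i).summable
  have hcsum : Summable (fun k : ℕ => fun i => ((genBinom r k * d i ^ k : ℝ) : ℂ)) :=
    Pi.summable.mpr hcs
  have hdiag : Summable (fun k : ℕ =>
      diagonal (fun i => ((genBinom r k * d i ^ k : ℝ) : ℂ))) :=
    summable_matrix_diagonal.mpr hcsum
  have h2 : (∑' k : ℕ, genBinom r k • X ^ k)
      = U * (∑' k : ℕ, diagonal (fun i => ((genBinom r k * d i ^ k : ℝ) : ℂ))) * star U := by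
    rw [tsum_congr hterm]
    calc ∑' k : ℕ, U * diagonal (fun i => ((genBinom r k * d i ^ k : ℝ) : ℂ)) * star U
        = (∑' k : ℕ, U * diagonal (fun i => ((genBinom r k * d i ^ k : ℝ) : ℂ))) * star U :=
          Summable.tsum_mul_right _ (hdiag.mul_left U)
      _ = U * (∑' k : ℕ, diagonal (fun i => ((genBinom r k * d i ^ k : ℝ) : ℂ))) * star U := by
          rw [Summable.tsum_mul_left U hdiag]
  have h3 : (∑' k : ℕ, diagonal (fun i => ((genBinom r k * d i ^ k : ℝ) : ℂ)))
      = diagonal (fun i => ((hA.eigenvalues i ^ r : ℝ) : ℂ)) := by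
    rw [← Matrix.diagonal_tsum]
    have harg : (∑' k : ℕ, fun i => ((genBinom r k * d i ^ k : ℝ) : ℂ))
        = fun i => ((hA.eigenvalues i ^ r : ℝ) : ℂ) := by
      funext i
      rw [tsum_apply hcsum, ← Complex.ofReal_tsum]
      congr 1
      exact (hsumd i).tsum_eq
    rw [harg]
  rw [h2, h3, matRpow, dif_pos hA]
  rfl
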